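/- arXiv:1010.4425 — 3 statements merged into one kernel-verified Lean document; each statement's English description precedes it below -/
import Mathlib

section
/- Let m ≥ 2 be an integer and ω ∈ (0, m−1] irrational. Let bₙ(ω) = b₁(τ_m^{n−1}(ω)) with b₁(x) = ⌊log x⁻¹/log m⌋ and τ_m(x) = m^{frac(log x⁻¹/log m)} − 1, and let pₙ, qₙ be the associated continuant sequences. Then for all n ≥ 1, ω = (pₙ + τ_m^n(ω)·m^{bₙ}·pₙ₋₁)/(qₙ + τ_m^n(ω)·m^{bₙ}·qₙ₋₁). -/
noncomputable def b1 (m : ℕ) (x : ℝ) : ℤ := ⌊Real.log x⁻¹ / Real.log m⌋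

noncomputable def tau (m : ℕ) (x : ℝ) : ℝ :=
  (m : ℝ) ^ (Real.log x⁻¹ / Real.log m - (b1 m x : ℝ)) - 1

noncomputable def digit (m : ℕ) (ω : ℝ) (n : ℕ) : ℤ := b1 m ((tau m)^[n - 1] ω)

lemma tau_nonneg (m : ℕ) (hm : 2 ≤ m) (x : ℝ) : 0 ≤ tau m x := by
  have hm1 : (1:ℝ) ≤ m := by exact_mod_cast Nat.one_le_of_lt hm
  have h : (1:ℝ) ≤ (m:ℝ) ^ (Real.log x⁻¹ / Real.log m - (b1 m x : ℝ)) :=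
    Real.one_le_rpow hm1 (sub_nonneg.2 (Int.floor_le _))
  simp only [tau]
  linarith

lemma tau_key (m : ℕ) (hm : 2 ≤ m) (x : ℝ) (hx : 0 < x) :
    x * ((m:ℝ) ^ (b1 m x) * (1 + tau m x)) = 1 := by
  have hm0 : (0:ℝ) < m := by positivity
  have hm1 : (1:ℝ) < m := by exact_mod_cast hm.trans_lt' one_lt_two
  have hlm : Real.log m ≠ 0 := ne_of_gt (Real.log_pos hm1)
  have h1 : 1 + tau m x = (m:ℝ) ^ (Real.log x⁻¹ / Real.log m - (b1 m x : ℝ)) := by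
    simp only [tau]; ring
  have h2 : (m:ℝ) ^ (Real.log x⁻¹ / Real.log m) = x⁻¹ := by
    rw [Real.rpow_def_of_pos hm0, mul_div_cancel₀ _ hlm, Real.exp_log (by positivity)]
  have h3 : ((m:ℝ) ^ (b1 m x) : ℝ) ≠ 0 := zpow_ne_zero _ (ne_of_gt hm0)
  rw [h1, Real.rpow_sub hm0, h2, Real.rpow_intCast]
  field_simp

lemma tau_pos_irr (m : ℕ) (hm : 2 ≤ m) (x : ℝ) (hx : 0 < x) (hirr : Irrational x) :
    0 < tau m x ∧ Irrational (tau m x) := by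
  have hm0 : (0:ℝ) < m := by positivity
  have key := tau_key m hm x hx
  have h3 : ((m:ℝ) ^ (b1 m x) : ℝ) ≠ 0 := zpow_ne_zero _ (ne_of_gt hm0)
  have hq : ((m:ℚ) ^ (b1 m x) : ℝ) = (m:ℝ) ^ (b1 m x) := by push_cast; ring
  have hmul : Irrational (x * ((m:ℚ) ^ (b1 m x) : ℚ)) :=
    hirr.mul_ratCast (by positivity)
  have hmul' : Irrational (x * (m:ℝ) ^ (b1 m x)) := by
    convert hmul using 2
    push_cast
    ring
  have hinv : Irrational ((x * (m:ℝ) ^ (b1 m x))⁻¹) := hmul'.inv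
  have h1 : tau m x = (x * (m:ℝ) ^ (b1 m x))⁻¹ - (1:ℤ) := by
    have hne : x * (m:ℝ) ^ (b1 m x) ≠ 0 := by positivity
    field_simp
    push_cast
    nlinarith [key]
  have hτ : Irrational (tau m x) := by rw [h1]; exact hinv.sub_intCast 1
  refine ⟨lt_of_le_of_ne (tau_nonneg m hm x) ?_, hτ⟩
  intro h
  exact hτ.ne_rat 0 (by rw [← h]; norm_num)

lemma iter_pos_irr (m : ℕ) (hm : 2 ≤ m) (ω : ℝ) (hω : Irrational ω) (hω0 : 0 < ω) :
    ∀ n, 0 < (tau m)^[n] ω ∧ Irrational ((tau m)^[n] ω) := by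
  intro n
  induction n with
  | zero => exact ⟨hω0, hω⟩
  | succ k ih =>
    rw [Function.iterate_succ_apply']
    exact tau_pos_irr m hm _ ih.1 ih.2

theorem omega_eq_mediant (m : ℕ) (hm : 2 ≤ m) (ω : ℝ) (hω : Irrational ω) (hω0 : 0 < ω) (hω1 : ω ≤ (m : ℝ) - 1)
    (p q : ℕ → ℝ)
    (hp0 : p 0 = 0) (hq0 : q 0 = 1) (hp1 : p 1 = 1) (hq1 : q 1 = (m : ℝ) ^ (digit m ω 1))
    (hp : ∀ n, 2 ≤ n → p n = (m : ℝ) ^ (digit m ω n) * p (n - 1) + (m : ℝ) ^ (digit m ω (n - 1)) * p (n - 2))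
    (hq : ∀ n, 2 ≤ n → q n = (m : ℝ) ^ (digit m ω n) * q (n - 1) + (m : ℝ) ^ (digit m ω (n - 1)) * q (n - 2)) :
    ∀ n, 1 ≤ n →
      ω = (p n + (tau m)^[n] ω * (m : ℝ) ^ (digit m ω n) * p (n - 1)) /
          (q n + (tau m)^[n] ω * (m : ℝ) ^ (digit m ω n) * q (n - 1)) := by
  have hm0 : (0:ℝ) < m := by positivity
  have hiter := iter_pos_irr m hm ω hω hω0
  -- positivity of q
  have hqpos : ∀ n, 0 < q n ∧ 0 < q (n+1) := by
    intro n
    induction n with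
    | zero =>
      refine ⟨by rw [hq0]; norm_num, ?_⟩
      rw [hq1]; exact zpow_pos hm0 _
    | succ k ih =>
      refine ⟨ih.2, ?_⟩
      have h2 : 2 ≤ k + 2 := by omega
      rw [hq (k+2) h2]
      have e1 : k + 2 - 1 = k + 1 := rfl
      have e2 : k + 2 - 2 = k := rfl
      rw [e1, e2]
      have z1 : (0:ℝ) < (m:ℝ) ^ (digit m ω (k+2)) := zpow_pos hm0 _
      have z2 : (0:ℝ) < (m:ℝ) ^ (digit m ω (k+1)) := zpow_pos hm0 _
      nlinarith [ih.1, ih.2]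
  -- main identity
  have main : ∀ n, 1 ≤ n →
      ω * (q n + (tau m)^[n] ω * (m : ℝ) ^ (digit m ω n) * q (n - 1)) =
      p n + (tau m)^[n] ω * (m : ℝ) ^ (digit m ω n) * p (n - 1) := by
    intro n hn
    induction n, hn using Nat.le_induction with
    | base =>
      have key := tau_key m hm ω hω0
      have hd1 : digit m ω 1 = b1 m ω := by simp [digit]
      simp only [hd1, hp1, hq1, hp0, hq0, Function.iterate_one]
      nlinarith [key]
    | succ n hn ih =>
      have hx := (hiter n).1
      have key := tau_key m hm ((tau m)^[n] ω) hx
      have hdn1 : digit m ω (n+1+1-1) = b1 m ((tau m)^[n] ω) := by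
        simp [digit]
      have hdsucc : digit m ω (n+1) = b1 m ((tau m)^[n] ω) := by
        simp [digit]
      have htsucc : (tau m)^[n+1] ω = tau m ((tau m)^[n] ω) :=
        Function.iterate_succ_apply' _ _ _
      have hkey : (tau m)^[n] ω * ((m:ℝ) ^ (digit m ω (n+1)) * (1 + (tau m)^[n+1] ω)) = 1 := by
        rw [hdsucc, htsucc]; exact key
      have h2 : 2 ≤ n + 1 := by omega
      have e1 : n + 1 - 1 = n := rfl
      have e2 : n + 1 - 2 = n - 1 := rfl
      have hqrec := hq (n+1) h2
      have hprec := hp (n+1) h2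
      rw [e1, e2] at hqrec hprec
      set t := (tau m)^[n] ω
      set t' := (tau m)^[n+1] ω
      set B := (m : ℝ) ^ (digit m ω n)
      set B' := (m : ℝ) ^ (digit m ω (n+1))
      rw [e1, hqrec, hprec]
      linear_combination (B' * (1 + t')) * ih + (B * p (n-1) - ω * B * q (n-1)) * hkey
  intro n hn
  have hD : 0 < q n + (tau m)^[n] ω * (m : ℝ) ^ (digit m ω n) * q (n - 1) := by
    have h1 : 0 < q n := (hqpos n).1
    have h2 : 0 < q (n-1) := (hqpos (n-1)).1
    have h3 : 0 < (tau m)^[n] ω := (hiter n).1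
    have h4 : (0:ℝ) < (m:ℝ) ^ (digit m ω n) := zpow_pos hm0 _
    positivity
  rw [eq_div_iff (ne_of_gt hD)]
  exact main n hn
end

section
/- Let m ≥ 2 be an integer and ω ∈ (0, m−1] irrational, with continuants pₙ, qₙ and digit sum Sₙ = b₁+⋯+bₙ from the m-adic continued fraction algorithm. Then for all n ≥ 1, |ω − pₙ/qₙ| ≤ m^{Sₙ}/(qₙ·qₙ₊₁) ≤ 1/qₙ. -/
lemma mOneLt {m : ℕ} (hm : 2 ≤ m) : (1:ℝ) < m := by
  exact_mod_cast lt_of_lt_of_le one_lt_two hm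

lemma mPos {m : ℕ} (hm : 2 ≤ m) : (0:ℝ) < m := lt_trans one_pos (mOneLt hm)

lemma b1_rpow_le {m : ℕ} (hm : 2 ≤ m) {x : ℝ} (hx : 0 < x) :
    (m:ℝ) ^ (b1 m x) * x ≤ 1 := by
  have hm1 := mOneLt hm
  have h0 := mPos hm
  have hlb : ((b1 m x : ℝ)) ≤ Real.logb m x⁻¹ := Int.floor_le _
  have h1 : (m:ℝ) ^ (b1 m x) ≤ x⁻¹ :=
    calc (m:ℝ) ^ (b1 m x) = (m:ℝ) ^ ((b1 m x : ℤ) : ℝ) := (Real.rpow_intCast _ _).symm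
      _ ≤ (m:ℝ) ^ (Real.logb m x⁻¹) := (Real.rpow_le_rpow_left_iff hm1).mpr hlb
      _ = x⁻¹ := Real.rpow_logb h0 hm1.ne' (inv_pos.mpr hx)
  calc (m:ℝ) ^ (b1 m x) * x ≤ x⁻¹ * x := mul_le_mul_of_nonneg_right h1 hx.le
    _ = 1 := inv_mul_cancel₀ hx.ne'

lemma tau_eq {m : ℕ} (hm : 2 ≤ m) {x : ℝ} (hx : 0 < x) :
    tau m x = x⁻¹ * ((m:ℝ) ^ (b1 m x))⁻¹ - 1 := by
  have hm1 := mOneLt hm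
  have h0 := mPos hm
  unfold tau
  rw [show Real.log x⁻¹ / Real.log m = Real.logb m x⁻¹ from rfl,
    Real.rpow_sub h0, Real.rpow_intCast,
    Real.rpow_logb h0 hm1.ne' (inv_pos.mpr hx), div_eq_mul_inv]

lemma key_rel {m : ℕ} (hm : 2 ≤ m) {x : ℝ} (hx : 0 < x) :
    (m:ℝ) ^ (b1 m x) * x * (tau m x + 1) = 1 := by
  have h0 := mPos hm
  have hz : ((m:ℝ) ^ (b1 m x)) ≠ 0 := (zpow_pos h0 _).ne'
  rw [tau_eq hm hx]
  field_simp
  ring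

lemma tau_pos {m : ℕ} (hm : 2 ≤ m) {x : ℝ} (hx : 0 < x) (hirr : Irrational x) :
    0 < tau m x := by
  have hm1 := mOneLt hm
  have h0 := mPos hm
  have hθ0 : (0:ℝ) ≤ Real.logb m x⁻¹ - (b1 m x : ℝ) :=
    sub_nonneg.mpr (Int.floor_le _)
  have hne : Real.logb m x⁻¹ ≠ ((b1 m x : ℤ) : ℝ) := by
    intro h
    have hxinv : x⁻¹ = (m:ℝ) ^ (b1 m x) := by
      rw [← Real.rpow_intCast, ← h, Real.rpow_logb h0 hm1.ne' (inv_pos.mpr hx)]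
    apply hirr
    refine ⟨((m:ℚ) ^ (-(b1 m x))), ?_⟩
    have hxe : x = ((m:ℝ) ^ (b1 m x))⁻¹ := by rw [← hxinv, inv_inv]
    push_cast [zpow_neg]
    rw [← hxe]
  have hθ : 0 < Real.logb m x⁻¹ - (b1 m x : ℝ) :=
    lt_of_le_of_ne hθ0 (fun h => hne (by linarith))
  unfold tau
  have h1 : (m:ℝ) ^ (0:ℝ) < (m:ℝ) ^ (Real.log x⁻¹ / Real.log m - (b1 m x : ℝ)) :=
    (Real.rpow_lt_rpow_left_iff hm1).mpr hθ
  rw [Real.rpow_zero] at h1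
  linarith

lemma tau_irrational {m : ℕ} (hm : 2 ≤ m) {x : ℝ} (hx : 0 < x) (hirr : Irrational x) :
    Irrational (tau m x) := by
  have h0 := mPos hm
  have hmQ : (m:ℚ) ≠ 0 := by positivity
  rw [tau_eq hm hx]
  have h1 : Irrational ((((m:ℚ) ^ (-(b1 m x)) : ℚ) : ℝ) * x⁻¹) :=
    hirr.inv.ratCast_mul (zpow_ne_zero _ hmQ)
  have h2 : (((m:ℚ) ^ (-(b1 m x)) : ℚ) : ℝ) * x⁻¹ = x⁻¹ * ((m:ℝ) ^ (b1 m x))⁻¹ := by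
    push_cast [zpow_neg]
    ring
  rw [h2] at h1
  simpa using h1.sub_intCast 1

theorem abs_error_upper_bound (m : ℕ) (hm : 2 ≤ m) (ω : ℝ) (hω : Irrational ω) (hω0 : 0 < ω) (hω1 : ω ≤ (m : ℝ) - 1)
    (p q : ℕ → ℝ)
    (hp0 : p 0 = 0) (hq0 : q 0 = 1) (hp1 : p 1 = 1) (hq1 : q 1 = (m : ℝ) ^ (digit m ω 1))
    (hp : ∀ n, 2 ≤ n → p n = (m : ℝ) ^ (digit m ω n) * p (n - 1) + (m : ℝ) ^ (digit m ω (n - 1)) * p (n - 2))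
    (hq : ∀ n, 2 ≤ n → q n = (m : ℝ) ^ (digit m ω n) * q (n - 1) + (m : ℝ) ^ (digit m ω (n - 1)) * q (n - 2)) :
    ∀ n, 1 ≤ n →
      |ω - p n / q n| ≤ (m : ℝ) ^ (∑ k ∈ Finset.Icc 1 n, digit m ω k) / (q n * q (n + 1)) ∧
      (m : ℝ) ^ (∑ k ∈ Finset.Icc 1 n, digit m ω k) / (q n * q (n + 1)) ≤ 1 / q n := by
  have hm1 := mOneLt hm
  have h0 := mPos hm
  have hzpos : ∀ j : ℤ, (0:ℝ) < (m:ℝ) ^ j := fun j => zpow_pos h0 j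
  set w : ℕ → ℝ := fun n => (tau m)^[n] ω with hwdef
  have hwit : ∀ n, w (n+1) = tau m (w n) := fun n => Function.iterate_succ_apply' _ _ _
  have hwprop : ∀ n, Irrational (w n) ∧ 0 < w n := by
    intro n
    induction n with
    | zero => exact ⟨hω, hω0⟩
    | succ n ih =>
      rw [hwit n]
      exact ⟨tau_irrational hm ih.2 ih.1, tau_pos hm ih.2 ih.1⟩
  have hd : ∀ n, digit m ω (n+1) = b1 m (w n) := fun n => rfl
  have hrel : ∀ n, (m:ℝ) ^ (digit m ω (n+1)) * w n * (w (n+1) + 1) = 1 := by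
    intro n
    rw [hd, hwit n]
    exact key_rel hm (hwprop n).2
  set S : ℕ → ℤ := fun n => ∑ j ∈ Finset.Icc 1 n, digit m ω j with hSdef
  have hS0 : S 0 = 0 := by simp [hSdef]
  have hS1 : S 1 = digit m ω 1 := by simp [hSdef]
  have hSsucc : ∀ n, S (n+1) = S n + digit m ω (n+1) := fun n =>
    Finset.sum_Icc_succ_top (by omega) _
  -- lower bounds on q
  have hqb : ∀ n, (m:ℝ) ^ (S n) ≤ q n ∧ (m:ℝ) ^ (S (n+1)) ≤ q (n+1) := by
    intro n
    induction n with
    | zero =>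
      constructor
      · rw [hS0, hq0]; norm_num
      · rw [hS1, hq1]
    | succ n ih =>
      refine ⟨ih.2, ?_⟩
      have e1 : n+2-1 = n+1 := rfl
      have e2 : n+2-2 = n := rfl
      have hrq := hq (n+2) (by omega)
      rw [e1, e2] at hrq
      have h1 : (m:ℝ) ^ (S (n+2)) = (m:ℝ) ^ (digit m ω (n+2)) * (m:ℝ) ^ (S (n+1)) := by
        rw [hSsucc (n+1), zpow_add₀ h0.ne']
        ring
      have h2 : (m:ℝ) ^ (digit m ω (n+2)) * (m:ℝ) ^ (S (n+1)) ≤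
          (m:ℝ) ^ (digit m ω (n+2)) * q (n+1) :=
        mul_le_mul_of_nonneg_left ih.2 (hzpos _).le
      have h3 : 0 < (m:ℝ) ^ (digit m ω (n+1)) * q n :=
        mul_pos (hzpos _) (lt_of_lt_of_le (hzpos _) ih.1)
      rw [hrq, h1]
      linarith
  have hqpos : ∀ n, 0 < q n := fun n => lt_of_lt_of_le (hzpos _) (hqb n).1
  -- main identity
  have hmain : ∀ n, ω * ((m:ℝ) ^ (digit m ω (n+1)) * q n * w (n+1) + q (n+1))
      = (m:ℝ) ^ (digit m ω (n+1)) * p n * w (n+1) + p (n+1) := by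
    intro n
    induction n with
    | zero =>
      have h := hrel 0
      have hw0 : w 0 = ω := rfl
      rw [hw0] at h
      rw [hp0, hq0, hp1, hq1]
      linear_combination h
    | succ n ih =>
      have key := hrel (n+1)
      have e1 : n+2-1 = n+1 := rfl
      have e2 : n+2-2 = n := rfl
      have hrq := hq (n+2) (by omega)
      have hrp := hp (n+2) (by omega)
      rw [e1, e2] at hrq hrp
      rw [hrq, hrp]
      linear_combination ((m:ℝ) ^ (digit m ω (n+2)) * (w (n+2) + 1)) * ih +
        ((m:ℝ) ^ (digit m ω (n+1)) * p n - ω * ((m:ℝ) ^ (digit m ω (n+1)) * q n)) * key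
  -- determinant identity
  have hdet : ∀ n, p (n+1) * q n - p n * q (n+1) = (-1:ℝ)^n * (m:ℝ) ^ (S n) := by
    intro n
    induction n with
    | zero =>
      rw [hp1, hq0, hp0, hq1, hS0]
      simp
    | succ n ih =>
      have e1 : n+2-1 = n+1 := rfl
      have e2 : n+2-2 = n := rfl
      have hrq := hq (n+2) (by omega)
      have hrp := hp (n+2) (by omega)
      rw [e1, e2] at hrq hrp
      have hsum : (m:ℝ) ^ (S (n+1)) = (m:ℝ) ^ (digit m ω (n+1)) * (m:ℝ) ^ (S n) := by
        rw [hSsucc n, zpow_add₀ h0.ne']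
        ring
      rw [hrq, hrp, hsum]
      linear_combination (-((m:ℝ) ^ (digit m ω (n+1)))) * ih
  -- assembly
  intro n hn
  obtain ⟨k, rfl⟩ : ∃ k, n = k + 1 := ⟨n-1, by omega⟩
  rw [show (∑ j ∈ Finset.Icc 1 (k+1), digit m ω j) = S (k+1) from rfl]
  have e1 : k+2-1 = k+1 := rfl
  have e2 : k+2-2 = k := rfl
  have hrq := hq (k+2) (by omega)
  rw [e1, e2] at hrq
  have hwpos := (hwprop (k+1)).2
  have hq1pos := hqpos (k+1)
  have hq2pos := hqpos (k+2)
  have hqkpos := hqpos k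
  set B : ℝ := (m:ℝ) ^ (digit m ω (k+1)) with hBdef
  have hBpos : 0 < B := hzpos _
  set A : ℝ := B * q k * w (k+1) + q (k+1) with hAdef
  have hApos : 0 < A := by
    have : 0 < B * q k * w (k+1) := mul_pos (mul_pos hBpos hqkpos) hwpos
    linarith
  have hH := hmain k
  have hD := hdet k
  have hSpos := hzpos (S (k+1))
  have hsum1 : (m:ℝ) ^ (S (k+1)) = B * (m:ℝ) ^ (S k) := by
    rw [hSsucc k, zpow_add₀ h0.ne', hBdef]
    ring
  have hkey2 : (m:ℝ) ^ (digit m ω (k+2)) * w (k+1) ≤ 1 := by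
    rw [hd (k+1)]
    exact b1_rpow_le hm hwpos
  -- error formula
  have h5 : ω * q (k+1) * A - p (k+1) * A
      = (-1:ℝ)^(k+1) * (w (k+1) * (m:ℝ) ^ (S (k+1))) := by
    rw [hsum1]
    linear_combination q (k+1) * hH + (- B * w (k+1)) * hD
  have habs : |ω - p (k+1) / q (k+1)|
      = w (k+1) * (m:ℝ) ^ (S (k+1)) / (A * q (k+1)) := by
    have h6 : ω - p (k+1) / q (k+1)
        = (-1:ℝ)^(k+1) * (w (k+1) * (m:ℝ) ^ (S (k+1))) / (A * q (k+1)) := by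
      rw [eq_div_iff (mul_pos hApos hq1pos).ne']
      have hexp : (ω - p (k+1) / q (k+1)) * (A * q (k+1))
          = ω * q (k+1) * A - p (k+1) * A := by
        field_simp
      rw [hexp, h5]
    rw [h6, abs_div, abs_mul, abs_pow, abs_neg, abs_one, one_pow, one_mul,
      abs_of_pos (mul_pos hwpos hSpos), abs_of_pos (mul_pos hApos hq1pos)]
  have h7 : w (k+1) * q (k+2) ≤ A := by
    rw [hrq, hAdef]
    have h71 : (m:ℝ) ^ (digit m ω (k+2)) * w (k+1) * q (k+1) ≤ 1 * q (k+1) :=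
      mul_le_mul_of_nonneg_right hkey2 hq1pos.le
    nlinarith
  constructor
  · rw [habs, div_le_div_iff₀ (mul_pos hApos hq1pos) (mul_pos hq1pos hq2pos)]
    have h8 := mul_le_mul_of_nonneg_right
      (mul_le_mul_of_nonneg_left h7 hSpos.le) hq1pos.le
    calc w (k+1) * (m:ℝ) ^ (S (k+1)) * (q (k+1) * q (k+2))
        = (m:ℝ) ^ (S (k+1)) * (w (k+1) * q (k+2)) * q (k+1) := by ring
      _ ≤ (m:ℝ) ^ (S (k+1)) * A * q (k+1) := h8
      _ = (m:ℝ) ^ (S (k+1)) * (A * q (k+1)) := by ring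
  · rw [div_le_div_iff₀ (mul_pos hq1pos hq2pos) hq1pos]
    have h9 : (m:ℝ) ^ (S (k+1)) ≤ q (k+2) := by
      rw [hrq, hsum1]
      have h91 : B * (m:ℝ) ^ (S k) ≤ B * q k :=
        mul_le_mul_of_nonneg_left (hqb k).1 hBpos.le
      have h92 : 0 < (m:ℝ) ^ (digit m ω (k+2)) * q (k+1) := mul_pos (hzpos _) hq1pos
      linarith
    calc (m:ℝ) ^ (S (k+1)) * q (k+1) ≤ q (k+2) * q (k+1) :=
          mul_le_mul_of_nonneg_right h9 hq1pos.le
      _ = 1 * (q (k+1) * q (k+2)) := by ring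
end

section
/- Let m ≥ 2 be an integer and ω ∈ (0, m−1] irrational. Then the convergents ωₙ = pₙ/qₙ of the m-adic continued fraction expansion of ω converge to ω: limₙ→∞ pₙ/qₙ = ω. -/
lemma mstep (m : ℕ) (hm : 2 ≤ m) (x : ℝ) (hx : Irrational x) (hx0 : 0 < x)
    (hx1 : x ≤ (m : ℝ) - 1) :
    ((m : ℝ) ^ (b1 m x) * x * (1 + tau m x) = 1) ∧ Irrational (tau m x) ∧ 0 < tau m x ∧
      tau m x ≤ (m : ℝ) - 1 ∧ (-1 : ℤ) ≤ b1 m x := by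
  have hm1 : (1 : ℝ) < m := by exact_mod_cast Nat.lt_of_lt_of_le one_lt_two hm
  have hm0 : (0 : ℝ) < m := by linarith
  set L : ℝ := Real.log x⁻¹ / Real.log m with hL
  have hrL : (m : ℝ) ^ L = x⁻¹ := by
    rw [hL, show Real.log x⁻¹ / Real.log m = Real.logb m x⁻¹ from rfl]
    exact Real.rpow_logb hm0 (ne_of_gt hm1) (inv_pos.2 hx0)
  have hb : b1 m x = ⌊L⌋ := rfl
  have hfl1 : (⌊L⌋ : ℝ) ≤ L := Int.floor_le L
  have hfl2 : L < ⌊L⌋ + 1 := Int.lt_floor_add_one L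
  have hzne : ((m : ℝ) ^ (b1 m x) : ℝ) ≠ 0 := (zpow_pos hm0 _).ne'
  have htau : tau m x = x⁻¹ * ((m : ℝ) ^ (b1 m x))⁻¹ - 1 := by
    unfold tau
    rw [Real.rpow_sub hm0, hrL, Real.rpow_intCast]
    ring
  have key1 : (m : ℝ) ^ (b1 m x) * x * (1 + tau m x) = 1 := by
    rw [htau]; field_simp; ring
  have hirr : Irrational (tau m x) := by
    rw [htau]
    have h1 : Irrational x⁻¹ := hx.inv
    have h2 : Irrational (x⁻¹ * ((((m : ℚ) ^ (b1 m x))⁻¹ : ℚ) : ℝ)) :=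
      h1.mul_ratCast (by positivity)
    have h3 : ((((m : ℚ) ^ (b1 m x))⁻¹ : ℚ) : ℝ) = ((m : ℝ) ^ (b1 m x))⁻¹ := by
      push_cast; ring
    rw [h3] at h2
    simpa using h2.sub_intCast 1
  have hge : 0 ≤ tau m x := by
    unfold tau
    have : (1 : ℝ) ≤ (m : ℝ) ^ (L - (b1 m x : ℝ)) := by
      have := Real.rpow_le_rpow_of_exponent_le hm1.le
        (show (0:ℝ) ≤ L - (b1 m x : ℝ) by rw [hb]; linarith)
      simpa using this
    linarith
  have hpos : 0 < tau m x := lt_of_le_of_ne hge (Ne.symm hirr.ne_zero)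
  have hlt : tau m x ≤ (m : ℝ) - 1 := by
    unfold tau
    have : (m : ℝ) ^ (L - (b1 m x : ℝ)) < (m : ℝ) ^ (1 : ℝ) := by
      apply Real.rpow_lt_rpow_of_exponent_lt hm1
      rw [hb]; push_cast; linarith
    rw [Real.rpow_one] at this
    linarith
  have hbneg : (-1 : ℤ) ≤ b1 m x := by
    rw [hb]
    apply Int.le_floor.2
    rw [hL]
    have hlogm : 0 < Real.log m := Real.log_pos hm1
    rw [le_div_iff₀ hlogm, Real.log_inv]
    have : Real.log x ≤ Real.log m := Real.log_le_log hx0 (by linarith)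
    push_cast
    linarith
  exact ⟨key1, hirr, hpos, hlt, hbneg⟩

noncomputable def XX (m : ℕ) (ω : ℝ) (n : ℕ) : ℝ := (tau m)^[n] ω

noncomputable def BB (m : ℕ) (ω : ℝ) (n : ℕ) : ℤ := b1 m (XX m ω n)

noncomputable def MM (m : ℕ) (ω : ℝ) (n : ℕ) : ℝ :=
  (m : ℝ) ^ (∑ k ∈ Finset.range n, BB m ω k)

set_option maxHeartbeats 1000000 in
theorem convergents_tendsto (m : ℕ) (hm : 2 ≤ m) (ω : ℝ) (hω : Irrational ω) (hω0 : 0 < ω) (hω1 : ω ≤ (m : ℝ) - 1)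
    (p q : ℕ → ℝ)
    (hp0 : p 0 = 0) (hq0 : q 0 = 1) (hp1 : p 1 = 1) (hq1 : q 1 = (m : ℝ) ^ (digit m ω 1))
    (hp : ∀ n, 2 ≤ n → p n = (m : ℝ) ^ (digit m ω n) * p (n - 1) + (m : ℝ) ^ (digit m ω (n - 1)) * p (n - 2))
    (hq : ∀ n, 2 ≤ n → q n = (m : ℝ) ^ (digit m ω n) * q (n - 1) + (m : ℝ) ^ (digit m ω (n - 1)) * q (n - 2)) :
    Filter.Tendsto (fun n => p n / q n) Filter.atTop (nhds ω) := by
  have hm1 : (1 : ℝ) < m := by exact_mod_cast Nat.lt_of_lt_of_le one_lt_two hm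
  have hm0 : (0 : ℝ) < m := by linarith
  -- invariants on the orbit
  have hX : ∀ n, Irrational (XX m ω n) ∧ 0 < XX m ω n ∧ XX m ω n ≤ (m : ℝ) - 1 := by
    intro n
    induction n with
    | zero => exact ⟨hω, hω0, hω1⟩
    | succ k ih =>
      have h : XX m ω (k + 1) = tau m (XX m ω k) := Function.iterate_succ_apply' _ _ _
      rw [h]
      obtain ⟨_, a, b, c, _⟩ := mstep m hm _ ih.1 ih.2.1 ih.2.2
      exact ⟨a, b, c⟩
  have hkey : ∀ n, (m : ℝ) ^ (BB m ω n) * XX m ω n * (1 + XX m ω (n + 1)) = 1 := by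
    intro n
    have h : XX m ω (n + 1) = tau m (XX m ω n) := Function.iterate_succ_apply' _ _ _
    rw [h]
    exact (mstep m hm _ (hX n).1 (hX n).2.1 (hX n).2.2).1
  have hBneg : ∀ n, (-1 : ℤ) ≤ BB m ω n := fun n =>
    (mstep m hm _ (hX n).1 (hX n).2.1 (hX n).2.2).2.2.2.2
  have hβpos : ∀ n, (0 : ℝ) < (m : ℝ) ^ (BB m ω n) := fun n => zpow_pos hm0 _
  have hβge : ∀ n, (m : ℝ)⁻¹ ≤ (m : ℝ) ^ (BB m ω n) := by
    intro n
    have := zpow_le_zpow_right₀ hm1.le (hBneg n)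
    simpa [zpow_neg_one] using this
  have hq1' : q 1 = (m : ℝ) ^ (BB m ω 0) := hq1
  have hp2 : ∀ n : ℕ, p (n + 2) =
      (m : ℝ) ^ (BB m ω (n + 1)) * p (n + 1) + (m : ℝ) ^ (BB m ω n) * p n :=
    fun n => hp (n + 2) (by omega)
  have hq2 : ∀ n : ℕ, q (n + 2) =
      (m : ℝ) ^ (BB m ω (n + 1)) * q (n + 1) + (m : ℝ) ^ (BB m ω n) * q n :=
    fun n => hq (n + 2) (by omega)
  have hqpos : ∀ n, 0 < q n ∧ 0 < q (n + 1) := by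
    intro n
    induction n with
    | zero =>
      refine ⟨by rw [hq0]; norm_num, ?_⟩
      rw [hq1']; exact hβpos 0
    | succ k ih =>
      refine ⟨ih.2, ?_⟩
      rw [hq2 k]
      have := hβpos (k + 1); have := hβpos k
      nlinarith [ih.1, ih.2]
  have hqge : ∀ n, (m : ℝ) ^ (BB m ω n) * q n ≤ q (n + 1) := by
    intro n
    cases n with
    | zero => rw [hq0, hq1']; simp
    | succ k =>
      rw [hq2 k]
      nlinarith [hβpos k, hβpos (k + 1), (hqpos k).1, (hqpos k).2]
  have hMpos : ∀ n, 0 < MM m ω n := fun n => zpow_pos hm0 _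
  have hMsucc : ∀ n, MM m ω (n + 1) = MM m ω n * (m : ℝ) ^ (BB m ω n) := by
    intro n
    unfold MM
    rw [Finset.sum_range_succ, zpow_add₀ (ne_of_gt hm0)]
  -- the fundamental identity
  have hI : ∀ n, ω * (q (n + 1) + XX m ω (n + 1) * (m : ℝ) ^ (BB m ω n) * q n) =
      p (n + 1) + XX m ω (n + 1) * (m : ℝ) ^ (BB m ω n) * p n := by
    intro n
    induction n with
    | zero =>
      rw [hp1, hp0, hq0, hq1']
      have k := hkey 0
      rw [show XX m ω 0 = ω from rfl] at k
      linear_combination k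
    | succ k ih =>
      rw [hp2 k, hq2 k]
      have R := hkey (k + 1)
      linear_combination ((m : ℝ) ^ (BB m ω (k + 1)) * (1 + XX m ω (k + 2))) * ih +
        ((m : ℝ) ^ (BB m ω k) * p k - ω * (m : ℝ) ^ (BB m ω k) * q k) * R
  -- determinant
  have hdet : ∀ n, p (n + 1) * q n - p n * q (n + 1) = (-1 : ℝ) ^ n * MM m ω n := by
    intro n
    induction n with
    | zero =>
      rw [hp1, hp0, hq0]
      simp [MM]
    | succ k ih =>
      rw [hp2 k, hq2 k, hMsucc k]
      linear_combination (-(m : ℝ) ^ (BB m ω k)) * ih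
  -- error bound
  have herr : ∀ n, |p (n + 1) / q (n + 1) - ω| ≤
      (m : ℝ) * (MM m ω (n + 1) / (q (n + 1) * q (n + 2))) := by
    intro n
    have hq1pos := (hqpos n).2
    have hq0pos := (hqpos n).1
    have hq2pos := (hqpos (n + 1)).2
    have hX1pos := (hX (n + 1)).2.1
    have hX2pos := (hX (n + 2)).2.1
    have hX2le := (hX (n + 2)).2.2
    have hb1 := hβpos (n + 1)
    have hbn := hβpos n
    have R := hkey (n + 1)
    have hT1 : XX m ω (n + 1) * (m : ℝ) ^ (BB m ω (n + 1)) ≤ 1 := by nlinarith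
    set T : ℝ := XX m ω (n + 1) * (m : ℝ) ^ (BB m ω n) with hT
    have hTpos : 0 < T := mul_pos hX1pos hbn
    have hDpos : 0 < q (n + 1) + T * q n := by positivity
    have heq : (p (n + 1) - ω * q (n + 1)) * (q (n + 1) + T * q n) =
        T * ((-1 : ℝ) ^ n * MM m ω n) := by
      linear_combination (-(q (n + 1))) * (hI n) + T * (hdet n)
    have habs : |p (n + 1) - ω * q (n + 1)| * (q (n + 1) + T * q n) = T * MM m ω n := by
      have h1 : |(p (n + 1) - ω * q (n + 1)) * (q (n + 1) + T * q n)| =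
          |p (n + 1) - ω * q (n + 1)| * (q (n + 1) + T * q n) := by
        rw [abs_mul, abs_of_pos hDpos]
      rw [← h1, heq, abs_mul, abs_of_pos hTpos, abs_mul, abs_pow, abs_neg, abs_one,
        one_pow, one_mul, abs_of_pos (hMpos n)]
    have hT1' : T * (m : ℝ) ^ (BB m ω (n + 1)) ≤ (m : ℝ) ^ (BB m ω n) := by
      rw [hT]
      nlinarith [mul_le_mul_of_nonneg_right hT1 hbn.le]
    have h5 : T * q (n + 2) ≤ (m : ℝ) * ((m : ℝ) ^ (BB m ω n)) * (q (n + 1) + T * q n) := by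
      rw [hq2 n]
      nlinarith [mul_le_mul_of_nonneg_right hT1' hq1pos.le,
        mul_pos (mul_pos hTpos hbn) hq0pos, mul_pos hbn hq1pos]
    have hrw : p (n + 1) / q (n + 1) - ω = (p (n + 1) - ω * q (n + 1)) / q (n + 1) := by
      field_simp
    rw [hrw, abs_div, abs_of_pos hq1pos,
      show (m : ℝ) * (MM m ω (n + 1) / (q (n + 1) * q (n + 2))) =
        ((m : ℝ) * MM m ω (n + 1)) / (q (n + 1) * q (n + 2)) from by ring,
      div_le_div_iff₀ hq1pos (by positivity)]
    apply le_of_mul_le_mul_right _ hDpos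
    have hmul := mul_le_mul_of_nonneg_left h5 (mul_nonneg (hMpos n).le hq1pos.le)
    calc |p (n + 1) - ω * q (n + 1)| * (q (n + 1) * q (n + 2)) * (q (n + 1) + T * q n)
        = |p (n + 1) - ω * q (n + 1)| * (q (n + 1) + T * q n) * (q (n + 1) * q (n + 2)) := by
          ring
      _ = T * MM m ω n * (q (n + 1) * q (n + 2)) := by rw [habs]
      _ = MM m ω n * q (n + 1) * (T * q (n + 2)) := by ring
      _ ≤ MM m ω n * q (n + 1) * ((m : ℝ) * ((m : ℝ) ^ (BB m ω n)) * (q (n + 1) + T * q n)) :=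
          hmul
      _ = (m : ℝ) * MM m ω (n + 1) * q (n + 1) * (q (n + 1) + T * q n) := by
          rw [hMsucc n]; ring
  -- geometric decay of the error term
  have hEdec : ∀ n, MM m ω (n + 1) / (q (n + 1) * q (n + 2)) ≤
      ((m : ℝ) / (m + 1)) * (MM m ω n / (q n * q (n + 1))) := by
    intro n
    have hq0pos := (hqpos n).1
    have hq1pos := (hqpos n).2
    have hq2pos := (hqpos (n + 1)).2
    have hbn := hβpos n
    have hb1ge := hβge (n + 1)
    have hqgen := hqge n
    have hstep' : ((m : ℝ) + 1) * ((m : ℝ) ^ (BB m ω n) * q n) ≤ m * q (n + 2) := by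
      rw [hq2 n]
      have h1 : (1 : ℝ) ≤ m * (m : ℝ) ^ (BB m ω (n + 1)) := by
        have := mul_le_mul_of_nonneg_left hb1ge hm0.le
        rwa [mul_inv_cancel₀ hm0.ne'] at this
      nlinarith [hqgen, mul_pos hbn hq0pos, hq1pos,
        mul_le_mul_of_nonneg_right h1 hq1pos.le]
    rw [show ((m : ℝ) / (m + 1)) * (MM m ω n / (q n * q (n + 1))) =
        ((m : ℝ) * MM m ω n) / ((m + 1) * (q n * q (n + 1))) from div_mul_div_comm _ _ _ _,
      div_le_div_iff₀ (by positivity) (by positivity)]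
    have hint := mul_le_mul_of_nonneg_left hstep'
      (mul_nonneg (hMpos n).le hq1pos.le)
    rw [hMsucc n]
    nlinarith [hint]
  have hEn : ∀ n, MM m ω n / (q n * q (n + 1)) ≤
      ((m : ℝ) / (m + 1)) ^ n * (MM m ω 0 / (q 0 * q 1)) := by
    intro n
    induction n with
    | zero => rw [pow_zero, one_mul]
    | succ k ih =>
      have hpos : (0 : ℝ) ≤ (m : ℝ) / (m + 1) := by positivity
      calc MM m ω (k + 1) / (q (k + 1) * q (k + 2)) ≤
          ((m : ℝ) / (m + 1)) * (MM m ω k / (q k * q (k + 1))) := hEdec k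
        _ ≤ ((m : ℝ) / (m + 1)) * (((m : ℝ) / (m + 1)) ^ k * (MM m ω 0 / (q 0 * q 1))) :=
            mul_le_mul_of_nonneg_left ih hpos
        _ = ((m : ℝ) / (m + 1)) ^ (k + 1) * (MM m ω 0 / (q 0 * q 1)) := by ring
  -- squeeze
  have hr1 : (m : ℝ) / (m + 1) < 1 := by
    rw [div_lt_one (by linarith)]; linarith
  have hr0 : (0 : ℝ) ≤ (m : ℝ) / (m + 1) := by positivity
  have hg : Filter.Tendsto
      (fun n : ℕ => ((m : ℝ) * (MM m ω 0 / (q 0 * q 1))) * ((m : ℝ) / (m + 1)) ^ n)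
      Filter.atTop (nhds 0) := by
    have h := tendsto_pow_atTop_nhds_zero_of_lt_one hr0 hr1
    have h2 := h.const_mul ((m : ℝ) * (MM m ω 0 / (q 0 * q 1)))
    rw [mul_zero] at h2
    exact h2
  have hsq : Filter.Tendsto (fun n => p n / q n - ω) Filter.atTop (nhds 0) := by
    apply squeeze_zero_norm' _ hg
    refine Filter.eventually_atTop.2 ⟨1, ?_⟩
    intro n hn
    obtain ⟨k, rfl⟩ : ∃ k, n = k + 1 := ⟨n - 1, by omega⟩
    have h1 : ‖p (k + 1) / q (k + 1) - ω‖ = |p (k + 1) / q (k + 1) - ω| := rfl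
    rw [h1]
    calc |p (k + 1) / q (k + 1) - ω| ≤
        (m : ℝ) * (MM m ω (k + 1) / (q (k + 1) * q (k + 2))) := herr k
      _ ≤ (m : ℝ) * (((m : ℝ) / (m + 1)) ^ (k + 1) * (MM m ω 0 / (q 0 * q 1))) :=
          mul_le_mul_of_nonneg_left (hEn (k + 1)) hm0.le
      _ = ((m : ℝ) * (MM m ω 0 / (q 0 * q 1))) * ((m : ℝ) / (m + 1)) ^ (k + 1) := by ring
  exact tendsto_sub_nhds_zero_iff.1 hsq
end
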